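/- Let n, m, k be natural numbers with m + k = n. Let U be a real n×k matrix, Ū a real n×m matrix, Γ̄ a real n×n matrix and Γ a real m×m matrix such that Ūᵀ·Ū = I_m, Uᵀ·U = I_k, Ūᵀ·U = 0, and Γ̄·Ū = Ū·Γ. Let W be the n×n matrix obtained by concatenating the columns of Γ̄·Ū (first m columns) with the columns of U (last k columns). Then |det(W)| = |det(Γ)|. -/

import Mathlib

open Matrix

/-- `|det [Γ̄Ū  U]| = |det Γ|` when the columns of `[Ū U]` are
orthonormal and `Γ̄ Ū = Ū Γ` (the claim `det D_ψ = ± det Γ` in Lemma A.2). -/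
theorem det_fromColumns_eq_det_gamma
    (n m k : ℕ) (hmk : m + k = n)
    (U : Matrix (Fin n) (Fin k) ℝ) (Ubar : Matrix (Fin n) (Fin m) ℝ)
    (Γbar : Matrix (Fin n) (Fin n) ℝ) (Γ : Matrix (Fin m) (Fin m) ℝ)
    (h1 : Ubarᵀ * Ubar = 1) (h2 : Uᵀ * U = 1) (h3 : Ubarᵀ * U = 0)
    (h4 : Γbar * Ubar = Ubar * Γ)
    (W : Matrix (Fin n) (Fin n) ℝ)
    (hW : W = (Matrix.fromCols (Γbar * Ubar) U).submatrix id
      ⇑(finSumFinEquiv.trans (finCongr hmk)).symm) :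
    |W.det| = |Γ.det| := by
  set e := (finSumFinEquiv.trans (finCongr hmk)).symm with he
  set Q : Matrix (Fin n) (Fin n) ℝ := (fromCols Ubar U).submatrix id ⇑e with hQ
  have hfact : fromCols (Γbar * Ubar) U =
      fromCols Ubar U * fromBlocks Γ 0 0 (1 : Matrix (Fin k) (Fin k) ℝ) := by
    rw [fromCols_mul_fromBlocks]
    simp [h4]
  have hWQ : W = Q * (fromBlocks Γ 0 0 (1 : Matrix (Fin k) (Fin k) ℝ)).submatrix ⇑e ⇑e := by
    rw [hW, hfact, hQ, submatrix_mul_equiv]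
  have hQtQ : Qᵀ * Q = 1 := by
    rw [hQ, transpose_submatrix, transpose_fromCols,
      show (id : Fin n → Fin n) = ⇑(Equiv.refl (Fin n)) from rfl,
      submatrix_mul_equiv (fromRows Ubarᵀ Uᵀ) (fromCols Ubar U) ⇑e (Equiv.refl (Fin n)) ⇑e,
      fromRows_mul_fromCols, h1, h2, h3]
    have h3' : Uᵀ * Ubar = 0 := by
      have := congrArg transpose h3
      simpa using this
    rw [h3', fromBlocks_one, submatrix_one_equiv]
  have hdetQ : |Q.det| = 1 := by
    have h := congrArg Matrix.det hQtQ
    rw [det_mul, det_transpose, det_one] at h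
    nlinarith [abs_nonneg Q.det, sq_abs Q.det]
  have hdetB : ((fromBlocks Γ 0 0 (1 : Matrix (Fin k) (Fin k) ℝ)).submatrix ⇑e ⇑e).det
      = Γ.det := by
    rw [det_submatrix_equiv_self, det_fromBlocks_zero₂₁]
    simp
  rw [hWQ, det_mul, abs_mul, hdetQ, hdetB, one_mul]
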